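/- For every real number x with 0 < |x| < π, cot(x) = 1/x − Σ_{n=1}^∞ (2^(2n)·|B₂ₙ|/(2n)!)·x^(2n−1), where the series converges to cot(x). -/

import Mathlib

open Real

open Filter Finset

-- Step B: geometric series per m
lemma geomStep (x : ℝ) (hx : 0 < x) (hπ : x < π) (m : ℕ) :
    HasSum (fun k : ℕ => 2 * x ^ (2 * k + 1) / (((m : ℝ) + 1) * π) ^ (2 * k + 2))
      (2 * x / ((((m : ℝ) + 1) * π) ^ 2 - x ^ 2)) := by
  have hc0 : 0 < ((m : ℝ) + 1) * π := by positivity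
  set c : ℝ := ((m : ℝ) + 1) * π with hc
  have hxc : x < c := by
    have h1 : (0:ℝ) ≤ (m:ℝ) := Nat.cast_nonneg m
    nlinarith [pi_pos]
  set r : ℝ := x ^ 2 / c ^ 2 with hr
  have hr0 : 0 ≤ r := by positivity
  have hr1 : r < 1 := by
    rw [hr, div_lt_one (by positivity)]
    exact pow_lt_pow_left₀ hxc hx.le two_ne_zero
  have h := (hasSum_geometric_of_lt_one hr0 hr1).mul_left (2 / x * r)
  have hcx : c ^ 2 - x ^ 2 ≠ 0 := by nlinarith
  have hrk : ∀ k : ℕ, r ^ k = x ^ (2 * k) / c ^ (2 * k) := by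
    intro k
    rw [hr, div_pow, ← pow_mul, ← pow_mul, mul_comm 2 k]
  have h2 : (fun k : ℕ => 2 / x * r * r ^ k)
      = fun k : ℕ => 2 * x ^ (2 * k + 1) / c ^ (2 * k + 2) := by
    funext k
    rw [hrk k, hr]
    field_simp
    ring
  have h3 : 2 / x * r * (1 - r)⁻¹ = 2 * x / (c ^ 2 - x ^ 2) := by
    rw [hr]
    rw [show (1 : ℝ) - x ^ 2 / c ^ 2 = (c ^ 2 - x ^ 2) / c ^ 2 by field_simp]
    field_simp
  rw [h2, h3] at h
  exact h

lemma zetaPos (K : ℕ) (hK : K ≠ 0) :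
    (0:ℝ) < (-1 : ℝ) ^ (K + 1) * (2 : ℝ) ^ (2 * K - 1) * π ^ (2 * K) *
        bernoulli (2 * K) / (Nat.factorial (2 * K) : ℝ) := by
  have h := hasSum_zeta_nat (k := K) hK
  have h1 : (1:ℝ) ≤ (-1 : ℝ) ^ (K + 1) * (2 : ℝ) ^ (2 * K - 1) * π ^ (2 * K) *
      bernoulli (2 * K) / (Nat.factorial (2 * K) : ℝ) := by
    have := le_hasSum h 1 (fun j _ => by positivity)
    simpa using this
  linarith

lemma absB (K : ℕ) (hK : K ≠ 0) :
    |((bernoulli (2 * K) : ℚ) : ℝ)| = (-1 : ℝ) ^ (K + 1) * ((bernoulli (2 * K) : ℚ) : ℝ) := by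
  have hp := zetaPos K hK
  have hfac : (0:ℝ) < (Nat.factorial (2 * K) : ℝ) := by positivity
  have h2 : (0:ℝ) < (2:ℝ) ^ (2 * K - 1) * π ^ (2 * K) := by positivity
  have hnum : 0 < (-1:ℝ) ^ (K + 1) * 2 ^ (2 * K - 1) * π ^ (2 * K) *
      ((bernoulli (2 * K) : ℚ) : ℝ) :=
    ((div_pos_iff.mp hp).resolve_right (fun h => absurd hfac (not_lt.mpr h.2.le))).1
  rcases Nat.even_or_odd (K + 1) with he | ho
  · rw [he.neg_one_pow] at hnum ⊢
    rw [one_mul, abs_of_pos (by nlinarith)]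
  · rw [ho.neg_one_pow] at hnum ⊢
    rw [abs_of_neg (by nlinarith)]; ring

lemma zetaStep (x : ℝ) (hx : x ≠ 0) (k : ℕ) :
    HasSum (fun m : ℕ => 2 * x ^ (2 * k + 1) / (((m : ℝ) + 1) * π) ^ (2 * k + 2))
      ((2 : ℝ) ^ (2 * (k + 1)) * |((bernoulli (2 * (k + 1)) : ℚ) : ℝ)| /
            (Nat.factorial (2 * (k + 1)) : ℝ) * x ^ (2 * (k + 1) - 1)) := by
  have hK : (k + 1) ≠ 0 := Nat.succ_ne_zero k
  have h := hasSum_zeta_nat (k := k + 1) hK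
  set Z : ℝ := (-1 : ℝ) ^ (k + 1 + 1) * (2 : ℝ) ^ (2 * (k+1) - 1) * π ^ (2 * (k+1)) *
        bernoulli (2 * (k+1)) / (Nat.factorial (2 * (k+1)) : ℝ) with hZ
  have hshift : HasSum (fun m : ℕ => 1 / ((m : ℝ) + 1) ^ (2 * (k + 1))) Z := by
    have hs := (hasSum_nat_add_iff' (f := fun n : ℕ => 1 / (n : ℝ) ^ (2 * (k + 1))) 1).mpr h
    simp only [Finset.range_one, Finset.sum_singleton, Nat.cast_zero,
      zero_pow (by omega : 2 * (k+1) ≠ 0), div_zero, sub_zero] at hs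
    convert hs using 2 with m
    case e'_3 => rfl
    push_cast
    ring
  have h4 := hshift.mul_left (2 * x ^ (2 * k + 1) / π ^ (2 * (k + 1)))
  have e1 : 2 * (k + 1) - 1 = 2 * k + 1 := by omega
  have e2 : 2 * (k + 1) = 2 * k + 2 := by omega
  have habs := absB (k + 1) hK
  have hπ := pi_ne_zero
  have hfun : (fun m : ℕ => 2 * x ^ (2 * k + 1) / π ^ (2 * (k + 1)) *
      (1 / ((m : ℝ) + 1) ^ (2 * (k + 1))))
      = fun m : ℕ => 2 * x ^ (2 * k + 1) / (((m : ℝ) + 1) * π) ^ (2 * k + 2) := by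
    funext m
    have hm : ((m : ℝ) + 1) ≠ 0 := by positivity
    rw [e2, mul_pow]
    field_simp
  have hval : 2 * x ^ (2 * k + 1) / π ^ (2 * (k + 1)) * Z
      = (2 : ℝ) ^ (2 * (k + 1)) * |((bernoulli (2 * (k + 1)) : ℚ) : ℝ)| /
            (Nat.factorial (2 * (k + 1)) : ℝ) * x ^ (2 * (k + 1) - 1) := by
    rw [habs, hZ, e1]
    rw [e2]
    have hfacne : (Nat.factorial (2 * k + 2) : ℝ) ≠ 0 := by positivity
    field_simp
    ring
  rw [hfun, hval] at h4
  exact h4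

lemma cotPF (x : ℝ) (hx : 0 < x) (hπx : x < π) :
    HasSum (fun m : ℕ => 2 * x / ((((m : ℝ) + 1) * π) ^ 2 - x ^ 2))
      (1 / x - Real.cos x / Real.sin x) := by
  set b : ℝ := (x + π) / 2 with hbdef
  have hb1 : x < b := by rw [hbdef]; linarith
  have hb2 : b < π := by rw [hbdef]; linarith
  have hb0 : 0 < b := lt_trans hx hb1
  set s : Set ℝ := Set.Ioo (0:ℝ) b with hs
  set f : ℕ → ℝ → ℝ := fun i y => 2 * y / (y ^ 2 - (((i : ℝ) + 1) * π) ^ 2) with hf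
  set u : ℕ → ℝ := fun i => (2 * b / (π ^ 2 - b ^ 2)) * (1 / ((i : ℝ) + 1) ^ 2) with hudef
  -- positivity of denominators
  have hcpos : ∀ (i : ℕ) (y : ℝ), y ∈ s →
      ((i : ℝ) + 1) ^ 2 * (π ^ 2 - b ^ 2) ≤ (((i : ℝ) + 1) * π) ^ 2 - y ^ 2 := by
    intro i y hy
    have hi : (1:ℝ) ≤ (i : ℝ) + 1 := by
      have := Nat.cast_nonneg (α := ℝ) i; linarith
    have hy2 : y ^ 2 ≤ b ^ 2 := by
      have := hy.1; have := hy.2; nlinarith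
    have : b ^ 2 ≤ ((i : ℝ) + 1) ^ 2 * b ^ 2 := by
      nlinarith [mul_nonneg (Nat.cast_nonneg (α := ℝ) i) (sq_nonneg b),
        mul_nonneg (mul_nonneg (Nat.cast_nonneg (α := ℝ) i) (Nat.cast_nonneg (α := ℝ) i))
          (sq_nonneg b)]
    rw [mul_pow]; nlinarith
  have hdenpos : ∀ (i : ℕ) (y : ℝ), y ∈ s → 0 < (((i : ℝ) + 1) * π) ^ 2 - y ^ 2 := by
    intro i y hy
    have hi : (1:ℝ) ≤ (i : ℝ) + 1 := by
      have := Nat.cast_nonneg (α := ℝ) i; linarith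
    refine lt_of_lt_of_le ?_ (hcpos i y hy)
    have h1 : 0 < π ^ 2 - b ^ 2 := by nlinarith
    have h2 : (0:ℝ) < ((i : ℝ) + 1) ^ 2 := by positivity
    exact mul_pos h2 h1
  -- summability of the bound
  have hu0 : Summable (fun i : ℕ => 1 / ((i : ℝ) + 1) ^ 2) := by
    have h2 := (summable_nat_add_iff (f := fun n : ℕ => 1 / (n : ℝ) ^ 2) 1).mpr
      (Real.summable_one_div_nat_pow.mpr one_lt_two)
    refine h2.congr fun i => ?_
    push_cast
    ring
  have hu : Summable u := hu0.mul_left _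
  -- the uniform bound
  have hbound : ∀ (i : ℕ) (y : ℝ), y ∈ s → ‖f i y‖ ≤ u i := by
    intro i y hy
    have hy0 := hy.1
    have hyb := hy.2
    have hd := hdenpos i y hy
    have hc := hcpos i y hy
    have hπb : 0 < π ^ 2 - b ^ 2 := by nlinarith
    have hi : (0:ℝ) < ((i : ℝ) + 1) ^ 2 := by positivity
    have h1 : f i y = -(2 * y / ((((i : ℝ) + 1) * π) ^ 2 - y ^ 2)) := by
      simp only [hf]
      rw [show y ^ 2 - (((i : ℝ) + 1) * π) ^ 2 = -((((i : ℝ) + 1) * π) ^ 2 - y ^ 2) by ring,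
        div_neg]
    rw [h1, norm_neg, Real.norm_eq_abs, abs_of_nonneg (by positivity)]
    have step : 2 * y / ((((i : ℝ) + 1) * π) ^ 2 - y ^ 2)
        ≤ (2 * b) / (((i : ℝ) + 1) ^ 2 * (π ^ 2 - b ^ 2)) := by
      apply div_le_div₀ (by positivity) (by linarith) (by positivity) hc
    refine le_trans step (le_of_eq ?_)
    rw [hudef]
    field_simp
  -- uniform convergence of partial sums of derivatives
  have hup : TendstoUniformlyOn (fun n y => ∑ i ∈ Finset.range n, f i y)
      (fun y => ∑' i, f i y) atTop s := tendstoUniformlyOn_tsum_nat hu hbound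
  have hone : TendstoUniformlyOn (fun (_ : ℕ) (y : ℝ) => 1 / y) (fun y => 1 / y) atTop s :=
    fun v hv => Filter.Eventually.of_forall fun _ y _ => refl_mem_uniformity hv
  have hF' : TendstoUniformlyOn (fun n y => 1 / y + ∑ i ∈ Finset.range n, f i y)
      (fun y => 1 / y + ∑' i, f i y) atTop s := hone.add hup
  -- derivatives of partial sums
  have hderiv : ∀ (n : ℕ), ∀ y ∈ s, HasDerivAt
      (fun z => Real.log z + ∑ i ∈ Finset.range n, Real.log (1 - z ^ 2 / (((i : ℝ) + 1) * π) ^ 2))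
      (1 / y + ∑ i ∈ Finset.range n, f i y) y := by
    intro n y hy
    have hy0 := hy.1
    have h1 : HasDerivAt Real.log y⁻¹ y := Real.hasDerivAt_log hy0.ne'
    have h2 : ∀ i ∈ Finset.range n, HasDerivAt
        (fun z : ℝ => Real.log (1 - z ^ 2 / (((i : ℝ) + 1) * π) ^ 2)) (f i y) y := by
      intro i _
      have hd := hdenpos i y hy
      have hc2 : (0:ℝ) < (((i : ℝ) + 1) * π) ^ 2 := by positivity
      have hne : 1 - y ^ 2 / (((i : ℝ) + 1) * π) ^ 2 ≠ 0 := by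
        rw [show (1:ℝ) - y ^ 2 / (((i : ℝ) + 1) * π) ^ 2
          = ((((i : ℝ) + 1) * π) ^ 2 - y ^ 2) / (((i : ℝ) + 1) * π) ^ 2 by field_simp]
        positivity
      have hinner : HasDerivAt (fun z : ℝ => 1 - z ^ 2 / (((i : ℝ) + 1) * π) ^ 2)
          (-((2:ℕ) * y ^ 1 / (((i : ℝ) + 1) * π) ^ 2)) y :=
        ((hasDerivAt_pow 2 y).div_const _).const_sub 1
      have hcomp := (Real.hasDerivAt_log hne).comp y hinner
      have hyC : y ^ 2 - (((i : ℝ) + 1) * π) ^ 2 ≠ 0 := by nlinarith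
      convert hcomp using 1
      all_goals try rfl
      simp only [hf]
      rw [show (1:ℝ) - y ^ 2 / (((i : ℝ) + 1) * π) ^ 2
        = ((((i : ℝ) + 1) * π) ^ 2 - y ^ 2) / (((i : ℝ) + 1) * π) ^ 2 by field_simp, inv_div]
      field_simp
      rw [← neg_sub, div_neg]; push_cast; ring
    have := h1.add (HasDerivAt.sum h2)
    convert this using 1
    all_goals try rfl
    · ext z; simp [Finset.sum_apply]
    rw [one_div]
  -- pointwise convergence to log ∘ sin
  have hpt : ∀ y ∈ s, Filter.Tendsto
      (fun n => Real.log y + ∑ i ∈ Finset.range n,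
        Real.log (1 - y ^ 2 / (((i : ℝ) + 1) * π) ^ 2))
      atTop (nhds (Real.log (Real.sin y))) := by
    intro y hy
    have hy0 := hy.1
    have hyπ : y < π := lt_trans hy.2 hb2
    have hsin : 0 < Real.sin y := Real.sin_pos_of_pos_of_lt_pi hy0 hyπ
    have hfac : ∀ j : ℕ, 0 < 1 - y ^ 2 / (((j : ℝ) + 1) * π) ^ 2 := by
      intro j
      have hd := hdenpos j y hy
      rw [show (1:ℝ) - y ^ 2 / (((j : ℝ) + 1) * π) ^ 2
        = ((((j : ℝ) + 1) * π) ^ 2 - y ^ 2) / (((j : ℝ) + 1) * π) ^ 2 by field_simp]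
      positivity
    have hP : Filter.Tendsto
        (fun n => y * ∏ j ∈ Finset.range n, (1 - y ^ 2 / (((j : ℝ) + 1) * π) ^ 2))
        atTop (nhds (Real.sin y)) := by
      have h := Real.tendsto_euler_sin_prod (y / π)
      have hππ : π * (y / π) = y := by field_simp
      rw [hππ] at h
      refine h.congr fun n => ?_
      congr 1
      refine Finset.prod_congr rfl fun j _ => ?_
      congr 1
      have hj : ((j : ℝ) + 1) ≠ 0 := by positivity
      rw [div_pow, div_div, mul_pow, mul_comm (π ^ 2)]
    have hlogcont := (Real.continuousAt_log hsin.ne').tendsto.comp hP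
    refine hlogcont.congr fun n => ?_
    rw [Function.comp_apply, Real.log_mul hy0.ne'
      (Finset.prod_pos (fun j _ => hfac j)).ne',
      Real.log_prod (fun j _ => (hfac j).ne')]
  -- the limit derivative
  have hmem : x ∈ s := ⟨hx, hb1⟩
  have main : HasDerivAt (fun y => Real.log (Real.sin y)) (1 / x + ∑' i, f i x) x :=
    hasDerivAt_of_tendstoUniformlyOn isOpen_Ioo hF'
      (Filter.Eventually.of_forall hderiv) hpt hmem
  have hsinx : 0 < Real.sin x := Real.sin_pos_of_pos_of_lt_pi hx hπx
  have hd2 : HasDerivAt (fun y => Real.log (Real.sin y)) (Real.cos x / Real.sin x) x := by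
    have := (Real.hasDerivAt_log hsinx.ne').comp x (Real.hasDerivAt_sin x)
    convert this using 1
    all_goals try rfl
    rw [div_eq_inv_mul]
  have heq : 1 / x + ∑' i, f i x = Real.cos x / Real.sin x := main.unique hd2
  have hsumm : Summable (fun i => f i x) :=
    Summable.of_norm_bounded hu (fun i => hbound i x hmem)
  have hneg := hsumm.hasSum.neg
  have hfun : (fun i => -(f i x)) = fun m : ℕ => 2 * x / ((((m : ℝ) + 1) * π) ^ 2 - x ^ 2) := by
    funext i
    simp only [hf]
    have hd := hdenpos i x hmem
    rw [show x ^ 2 - (((i : ℝ) + 1) * π) ^ 2 = -((((i : ℝ) + 1) * π) ^ 2 - x ^ 2) by ring,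
      div_neg, neg_neg]
  have hval : -(∑' i, f i x) = 1 / x - Real.cos x / Real.sin x := by linarith
  rw [hfun, hval] at hneg
  exact hneg

lemma keyPos (x : ℝ) (hx : 0 < x) (hπx : x < π) :
    HasSum
      (fun n : ℕ =>
        (2 : ℝ) ^ (2 * (n + 1)) * |((bernoulli (2 * (n + 1)) : ℚ) : ℝ)| /
            (Nat.factorial (2 * (n + 1)) : ℝ) * x ^ (2 * (n + 1) - 1))
      (1 / x - Real.cos x / Real.sin x) := by
  set g : ℕ × ℕ → ℝ :=
    fun p => 2 * x ^ (2 * p.2 + 1) / (((p.1 : ℝ) + 1) * π) ^ (2 * p.2 + 2) with hg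
  have hcot := cotPF x hx hπx
  have hfib : ∀ m : ℕ, HasSum (fun k => g (m, k))
      (2 * x / ((((m : ℝ) + 1) * π) ^ 2 - x ^ 2)) := fun m => geomStep x hx hπx m
  have hsum : Summable g := by
    refine (summable_prod_of_nonneg ?_).mpr ⟨fun m => (hfib m).summable, ?_⟩
    · intro p
      have : (0:ℝ) < ((p.1 : ℝ) + 1) * π := by positivity
      simp only [hg]
      positivity
    · refine hcot.summable.congr fun m => ?_
      exact ((hfib m).tsum_eq).symm
  have hT : HasSum g (∑' p, g p) := hsum.hasSum
  have h1 : HasSum (fun m : ℕ => 2 * x / ((((m : ℝ) + 1) * π) ^ 2 - x ^ 2)) (∑' p, g p) :=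
    hT.prod_fiberwise hfib
  have hval : ∑' p, g p = 1 / x - Real.cos x / Real.sin x := h1.unique hcot
  have hswap : HasSum (g ∘ (Equiv.prodComm ℕ ℕ)) (∑' p, g p) :=
    (Equiv.prodComm ℕ ℕ).hasSum_iff.mpr hT
  have h2 := hswap.prod_fiberwise (g := fun k : ℕ =>
      (2 : ℝ) ^ (2 * (k + 1)) * |((bernoulli (2 * (k + 1)) : ℚ) : ℝ)| /
            (Nat.factorial (2 * (k + 1)) : ℝ) * x ^ (2 * (k + 1) - 1))
    (fun k => zetaStep x hx.ne' k)
  rwa [hval] at h2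

theorem stmt_11 (x : ℝ) (hx₀ : 0 < |x|) (hxπ : |x| < π) :
    HasSum
      (fun n : ℕ =>
        (2 : ℝ) ^ (2 * (n + 1)) * |((bernoulli (2 * (n + 1)) : ℚ) : ℝ)| /
            (Nat.factorial (2 * (n + 1)) : ℝ) * x ^ (2 * (n + 1) - 1))
      (1 / x - Real.cos x / Real.sin x) := by
  rcases (abs_pos.mp hx₀).lt_or_gt with hneg | hpos
  · rw [abs_of_neg hneg] at hxπ
    have h := (keyPos (-x) (by linarith) hxπ).neg
    have hodd : ∀ n : ℕ, (-x) ^ (2 * (n + 1) - 1) = -(x ^ (2 * (n + 1) - 1)) :=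
      fun n => Odd.neg_pow (by rw [Nat.odd_iff]; omega) x
    convert h using 1
    all_goals try rfl
    · funext n; rw [hodd n]; ring
    · rw [Real.cos_neg, Real.sin_neg]; ring
  · rw [abs_of_pos hpos] at hxπ
    exact keyPos x hpos hxπ
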